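/- The rooted k-contraction of a finite pointed model M has the least number of worlds among all finite pointed models k-bisimilar to M. -/
import Mathlib


/-- A finite pointed Kripke model with modality indices `I` and atoms `P`. -/
structure PModel (I P : Type) where
  W : Type
  fin : Finite W
  R : I → W → W → Prop
  V : P → W → Prop
  d : W

variable {I P : Type}

/-- `h`-bisimilarity between worlds of two models (back-and-forth to depth `h`). -/
def Bisim (M N : PModel I P) : ℕ → M.W → N.W → Prop
  | 0, w, v => ∀ p, M.V p w ↔ N.V p v
  | h+1, w, v => (∀ p, M.V p w ↔ N.V p v)
      ∧ (∀ i w', M.R i w w' → ∃ v', N.R i v v' ∧ Bisim M N h w' v')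
      ∧ (∀ i v', N.R i v v' → ∃ w', M.R i w w' ∧ Bisim M N h w' v')

/-- `k`-bisimilarity of pointed models. -/
def PBisim (k : ℕ) (M N : PModel I P) : Prop := Bisim M N k M.d N.d

/-- Directed paths of length `n`. -/
def Steps (M : PModel I P) : ℕ → M.W → M.W → Prop
  | 0, w, v => w = v
  | n+1, w, v => ∃ u i, M.R i w u ∧ Steps M n u v

/-- Depth of a world: length of a shortest path from the designated world (`⊤` if none). -/
noncomputable def depth (M : PModel I P) (w : M.W) : ℕ∞ :=
  sInf {n : ℕ∞ | ∃ m : ℕ, n = (m : ℕ∞) ∧ Steps M m M.d w}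

/-- Bound `b(w) = k − d(w)`, with `⊥` for unreachable worlds. -/
noncomputable def bound (k : ℕ) (M : PModel I P) (w : M.W) : WithBot ℤ :=
  ENat.recTopCoe (⊥ : WithBot ℤ) (fun n : ℕ => (((k : ℤ) - n : ℤ) : WithBot ℤ)) (depth M w)

/-- The bound as a natural number (meaningful when `0 ≤ bound k M w`). -/
noncomputable def nbound (k : ℕ) (M : PModel I P) (w : M.W) : ℕ :=
  k - (depth M w).toNat
/-- `x` represents `y` : `b(x) ≥ b(y) ≥ 0` and `x ∼_{b(y)} y`. -/
noncomputable def Repr' (k : ℕ) (M : PModel I P) (x y : M.W) : Prop :=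
  0 ≤ bound k M y ∧ bound k M y ≤ bound k M x ∧ Bisim M M (nbound k M y) x y

/-- `x` strictly represents `y`. -/
noncomputable def SRepr (k : ℕ) (M : PModel I P) (x y : M.W) : Prop :=
  Repr' k M x y ∧ bound k M y < bound k M x

/-- Maximal representatives. -/
noncomputable def maxRepr (k : ℕ) (M : PModel I P) : Set M.W :=
  {x | 0 ≤ bound k M x ∧ ∀ y, ¬ SRepr k M y x}

/-- Representative class `[x]_{b(x)}`. -/
noncomputable def reprClass (k : ℕ) (M : PModel I P) (x : M.W) : Set M.W :=
  {y | Bisim M M (nbound k M x) x y}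

lemma depth_d (M : PModel I P) : depth M M.d = 0 := by
  have h0 : (0 : ℕ∞) ∈ {n : ℕ∞ | ∃ m : ℕ, n = (m : ℕ∞) ∧ Steps M m M.d M.d} :=
    ⟨0, by simp, rfl⟩
  have := sInf_le h0
  simpa [depth, le_zero_iff] using this

lemma bound_d (k : ℕ) (M : PModel I P) : bound k M M.d = ((k : ℤ) : WithBot ℤ) := by
  have h := depth_d M
  simp only [bound, h, ENat.recTopCoe_zero]
  norm_num

lemma bound_le (k : ℕ) (M : PModel I P) (w : M.W) : bound k M w ≤ ((k : ℤ) : WithBot ℤ) := by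
  simp only [bound]
  by_cases hd : depth M w = ⊤
  · simp [hd]
  · lift depth M w to ℕ using hd with n hn
    simp only [ENat.recTopCoe_coe]
    exact_mod_cast (by omega : (k : ℤ) - n ≤ (k:ℤ))

lemma d_mem_maxRepr (k : ℕ) (M : PModel I P) : M.d ∈ maxRepr k M := by
  constructor
  · rw [bound_d]; exact_mod_cast Int.ofNat_nonneg k
  · rintro y ⟨_, hlt⟩
    exact absurd (lt_of_lt_of_le hlt (bound_le k M y)) (by rw [bound_d]; exact lt_irrefl _)

/-- Carrier of the rooted k-contraction: representative classes of maximal representatives. -/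
def ContrW (k : ℕ) (M : PModel I P) : Type :=
  {S : Set M.W // ∃ x ∈ maxRepr k M, S = reprClass k M x}

instance (k : ℕ) (M : PModel I P) : Finite (ContrW k M) := by
  have := M.fin
  exact Subtype.finite

/-- The rooted `k`-contraction. -/
noncomputable def rootedContraction (k : ℕ) (M : PModel I P) : PModel I P where
  W := ContrW k M
  fin := inferInstance
  R := fun i S T => ∃ x ∈ maxRepr k M, ∃ y ∈ maxRepr k M,
        S.1 = reprClass k M x ∧ T.1 = reprClass k M y ∧
        0 < bound k M x ∧ ∃ z, M.R i x z ∧ Bisim M M (nbound k M x - 1) y z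
  V := fun p S => ∃ x ∈ maxRepr k M, S.1 = reprClass k M x ∧ M.V p x
  d := ⟨reprClass k M M.d, M.d, d_mem_maxRepr k M, rfl⟩

lemma bisim_mono {M N : PModel I P} :
    ∀ {h h' : ℕ} {w : M.W} {v : N.W}, h' ≤ h → Bisim M N h w v → Bisim M N h' w v := by
  intro h
  induction h with
  | zero =>
    intro h' w v hle hb
    interval_cases h'
    exact hb
  | succ n ih =>
    intro h' w v hle hb
    match h' with
    | 0 => exact hb.1
    | h'' + 1 =>
      obtain ⟨ha, hf, hbk⟩ := hb
      refine ⟨ha, ?_, ?_⟩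
      · intro i w' hr
        obtain ⟨v', hrv, hb'⟩ := hf i w' hr
        exact ⟨v', hrv, ih (Nat.succ_le_succ_iff.mp hle) hb'⟩
      · intro i v' hr
        obtain ⟨w', hrw, hb'⟩ := hbk i v' hr
        exact ⟨w', hrw, ih (Nat.succ_le_succ_iff.mp hle) hb'⟩

lemma bisim_symm {M N : PModel I P} :
    ∀ {h : ℕ} {w : M.W} {v : N.W}, Bisim M N h w v → Bisim N M h v w := by
  intro h
  induction h with
  | zero =>
    intro w v hb p
    exact (hb p).symm
  | succ n ih =>
    intro w v hb
    obtain ⟨ha, hf, hbk⟩ := hb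
    refine ⟨fun p => (ha p).symm, ?_, ?_⟩
    · intro i v' hr
      obtain ⟨w', hrw, hb'⟩ := hbk i v' hr
      exact ⟨w', hrw, ih hb'⟩
    · intro i w' hr
      obtain ⟨v', hrv, hb'⟩ := hf i w' hr
      exact ⟨v', hrv, ih hb'⟩

lemma bisim_trans {M N O : PModel I P} :
    ∀ {h : ℕ} {w : M.W} {v : N.W} {u : O.W},
      Bisim M N h w v → Bisim N O h v u → Bisim M O h w u := by
  intro h
  induction h with
  | zero =>
    intro w v u h1 h2 p
    exact (h1 p).trans (h2 p)
  | succ n ih =>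
    intro w v u h1 h2
    obtain ⟨ha1, hf1, hb1⟩ := h1
    obtain ⟨ha2, hf2, hb2⟩ := h2
    refine ⟨fun p => (ha1 p).trans (ha2 p), ?_, ?_⟩
    · intro i w' hr
      obtain ⟨v', hrv, hbv⟩ := hf1 i w' hr
      obtain ⟨u', hru, hbu⟩ := hf2 i v' hrv
      exact ⟨u', hru, ih hbv hbu⟩
    · intro i u' hr
      obtain ⟨v', hrv, hbv⟩ := hb2 i u' hr
      obtain ⟨w', hrw, hbw⟩ := hb1 i v' hrv
      exact ⟨w', hrw, ih hbw hbv⟩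

lemma steps_bisim {M N : PModel I P} :
    ∀ {m h : ℕ} {w w' : M.W} {v : N.W}, m ≤ h → Steps M m w w' → Bisim M N h w v →
      ∃ v', Bisim M N (h - m) w' v' := by
  intro m
  induction m with
  | zero =>
    intro h w w' v _ hs hb
    cases hs
    exact ⟨v, hb⟩
  | succ n ih =>
    intro h w w' v hle hs hb
    obtain ⟨u, i, hr, hs'⟩ := hs
    match h, hle with
    | h'' + 1, hle =>
      obtain ⟨_, hf, _⟩ := hb
      obtain ⟨v', hrv, hb'⟩ := hf i u hr
      obtain ⟨v'', hb''⟩ := ih (Nat.succ_le_succ_iff.mp hle) hs' hb'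
      exact ⟨v'', by simpa [Nat.succ_sub_succ] using hb''⟩

lemma bound_spec {k : ℕ} {M : PModel I P} {w : M.W} (h : 0 ≤ bound k M w) :
    ∃ n : ℕ, n ≤ k ∧ depth M w = (n : ℕ∞) ∧ nbound k M w = k - n ∧ Steps M n M.d w := by
  by_cases hd : depth M w = ⊤
  · rw [bound, hd] at h
    simp at h
  · -- the set of path lengths is nonempty
    have hne : {m : ℕ | Steps M m M.d w}.Nonempty := by
      by_contra hemp
      apply hd
      have : {n : ℕ∞ | ∃ m : ℕ, n = (m : ℕ∞) ∧ Steps M m M.d w} = ∅ := by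
        ext n
        simp only [Set.mem_setOf_eq, Set.mem_empty_iff_false, iff_false]
        rintro ⟨m, _, hs⟩
        exact hemp ⟨m, hs⟩
      rw [depth, this, sInf_empty]
    set n₀ := sInf {m : ℕ | Steps M m M.d w} with hn₀
    have hmem : Steps M n₀ M.d w := Nat.sInf_mem hne
    have hdepth : depth M w = (n₀ : ℕ∞) := by
      apply le_antisymm
      · exact sInf_le ⟨n₀, rfl, hmem⟩
      · apply le_sInf
        rintro b ⟨m, rfl, hs⟩
        exact_mod_cast Nat.sInf_le hs
    have hnk : n₀ ≤ k := by
      rw [bound, hdepth] at h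
      simp only [ENat.recTopCoe_coe] at h
      have : (0 : ℤ) ≤ (k : ℤ) - n₀ := by exact_mod_cast h
      omega
    refine ⟨n₀, hnk, hdepth, ?_, hmem⟩
    rw [nbound, hdepth]
    simp

lemma key_lemma {k : ℕ} {M N : PModel I P} {x y : M.W} {v : N.W}
    (hy : y ∈ maxRepr k M)
    (hxb : 0 ≤ bound k M x) (hyb : 0 ≤ bound k M y)
    (hbx : Bisim M N (nbound k M x) x v) (hby : Bisim M N (nbound k M y) y v)
    (hle : nbound k M y ≤ nbound k M x) :
    reprClass k M x = reprClass k M y := by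
  obtain ⟨nx, hnxk, hdx, hnbx, _⟩ := bound_spec hxb
  obtain ⟨ny, hnyk, hdy, hnby, _⟩ := bound_spec hyb
  have hxy : Bisim M M (nbound k M y) x y :=
    bisim_trans (bisim_mono hle hbx) (bisim_symm hby)
  have hble : bound k M y ≤ bound k M x := by
    rw [hnbx, hnby] at hle
    rw [bound, bound, hdx, hdy]
    simp only [ENat.recTopCoe_coe]
    have : (k : ℤ) - ny ≤ (k : ℤ) - nx := by omega
    exact_mod_cast this
  have hrep : Repr' k M x y := ⟨hyb, hble, hxy⟩
  have hnotlt : ¬ bound k M y < bound k M x := fun hlt => hy.2 x ⟨hrep, hlt⟩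
  have hbeq : bound k M y = bound k M x := le_antisymm hble (not_lt.mp hnotlt)
  have hneq : nbound k M x = nbound k M y := by
    rw [bound, bound, hdx, hdy] at hbeq
    simp only [ENat.recTopCoe_coe] at hbeq
    have : (k : ℤ) - ny = (k : ℤ) - nx := by exact_mod_cast hbeq
    rw [hnbx, hnby]
    omega
  have hxy' : Bisim M M (nbound k M x) x y := hneq ▸ hxy
  ext z
  simp only [reprClass, Set.mem_setOf_eq]
  constructor
  · intro hz
    rw [← hneq]
    exact bisim_trans (bisim_symm hxy') hz
  · intro hz
    exact bisim_trans hxy' (hneq.symm ▸ hz)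

/-- World minimality: the rooted `k`-contraction has the least number of worlds among
all pointed models `k`-bisimilar to `M`. -/
theorem rootedContraction_world_minimal (k : ℕ) (M : PModel I P)
    (N : PModel I P) (hN : PBisim k M N) :
    Nat.card (rootedContraction k M).W ≤ Nat.card N.W := by
  have hfinN : Finite N.W := N.fin
  have hv : ∀ S : ContrW k M, ∃ x : M.W, x ∈ maxRepr k M ∧ S.1 = reprClass k M x ∧
      ∃ v : N.W, Bisim M N (nbound k M x) x v := by
    intro S
    obtain ⟨x, hx, hS⟩ := S.2
    obtain ⟨n, hnk, _, hnb, hsteps⟩ := bound_spec hx.1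
    obtain ⟨v, hvb⟩ := steps_bisim hnk hsteps hN
    exact ⟨x, hx, hS, v, by rw [hnb]; exact hvb⟩
  choose x hx hSx v hvb using hv
  have hinj : Function.Injective v := by
    intro S T hST
    have hclass : reprClass k M (x S) = reprClass k M (x T) := by
      rcases le_total (nbound k M (x T)) (nbound k M (x S)) with hle | hle
      · exact key_lemma (hx T) (hx S).1 (hx T).1 (hvb S) (hST ▸ hvb T) hle
      · exact (key_lemma (hx S) (hx T).1 (hx S).1 (hST ▸ hvb T) (hvb S) hle).symm
    have : S.1 = T.1 := by rw [hSx S, hSx T, hclass]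
    exact Subtype.ext this
  exact Nat.card_le_card_of_injective v hinj
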